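/- Let n ≥ 1, N = 2^n, let x ∈ ℝ^N be nonzero with x_i ≥ 0 for all i, and set α_i = arccos(x_i / max_j x_j). Let ε > 0 and set t = 2n + ⌈log₂(π/ε)⌉. If α̃_i ∈ ℝ satisfy 0 ≤ α̃_i ≤ α_i and α_i − α̃_i < π/2^{t+1} for all i, then: (i) (1/2^n)·Σ_i cos² α̃_i ≥ ‖x‖²/(2^n · max_i x_i²), and (ii) the unit vectors x_r = x/‖x‖ and x̃_r with entries cos α̃_i / √(Σ_j cos² α̃_j) satisfy ‖x_r − x̃_r‖ ≤ ε. -/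

import Mathlib

/-- The largest entry `max_j x_j` of a vector `x : Fin (2^n) → ℝ`. -/
noncomputable def maxEntry (n : ℕ) (x : Fin (2 ^ n) → ℝ) : ℝ :=
  Finset.univ.sup' ⟨⟨0, Nat.two_pow_pos n⟩, Finset.mem_univ _⟩ x

/-- |cos a - cos b| ≤ |a - b|. -/
lemma abs_cos_sub_cos_le (a b : ℝ) : |Real.cos a - Real.cos b| ≤ |a - b| := by
  rw [Real.cos_sub_cos]
  have h1 : |Real.sin ((a + b) / 2)| ≤ 1 := Real.abs_sin_le_one _
  have h2 : |Real.sin ((a - b) / 2)| ≤ |(a - b) / 2| := Real.abs_sin_le_abs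
  calc |(-2) * Real.sin ((a + b) / 2) * Real.sin ((a - b) / 2)|
      = 2 * |Real.sin ((a + b) / 2)| * |Real.sin ((a - b) / 2)| := by
        rw [abs_mul, abs_mul]; norm_num
    _ ≤ 2 * 1 * |(a - b) / 2| := by
        apply mul_le_mul _ h2 (abs_nonneg _) (by norm_num)
        nlinarith [abs_nonneg (Real.sin ((a + b) / 2))]
    _ = |a - b| := by rw [abs_div, abs_two]; ring

/-- Distance between normalized vectors bound. -/
lemma normalize_sub_le {E : Type*} [NormedAddCommGroup E] [NormedSpace ℝ E]
    (a b : E) (ha : a ≠ 0) (hb : b ≠ 0) :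
    ‖‖a‖⁻¹ • a - ‖b‖⁻¹ • b‖ ≤ 2 * ‖a - b‖ / ‖a‖ := by
  have ha' : (0 : ℝ) < ‖a‖ := norm_pos_iff.mpr ha
  have hb' : (0 : ℝ) < ‖b‖ := norm_pos_iff.mpr hb
  have key : ‖a‖⁻¹ • a - ‖b‖⁻¹ • b
      = ‖a‖⁻¹ • (a - b) + (‖a‖⁻¹ - ‖b‖⁻¹) • b := by
    rw [smul_sub, sub_smul]; abel
  have hdiff : |‖a‖⁻¹ - ‖b‖⁻¹| * ‖b‖ ≤ ‖a - b‖ / ‖a‖ := by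
    have h1 : ‖a‖⁻¹ - ‖b‖⁻¹ = (‖b‖ - ‖a‖) / (‖a‖ * ‖b‖) := by
      field_simp
    have h2 : |‖b‖ - ‖a‖| ≤ ‖a - b‖ := by
      rw [abs_sub_comm]
      exact abs_norm_sub_norm_le a b
    have h3 : |‖b‖ - ‖a‖| / (‖a‖ * ‖b‖) * ‖b‖ = |‖b‖ - ‖a‖| / ‖a‖ := by
      field_simp
    rw [h1, abs_div, abs_of_pos (by positivity : (0:ℝ) < ‖a‖ * ‖b‖), h3]
    gcongr
  rw [key]
  calc ‖‖a‖⁻¹ • (a - b) + (‖a‖⁻¹ - ‖b‖⁻¹) • b‖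
      ≤ ‖‖a‖⁻¹ • (a - b)‖ + ‖(‖a‖⁻¹ - ‖b‖⁻¹) • b‖ := norm_add_le _ _
    _ = ‖a‖⁻¹ * ‖a - b‖ + |‖a‖⁻¹ - ‖b‖⁻¹| * ‖b‖ := by
        rw [norm_smul, norm_smul, norm_inv, norm_norm, Real.norm_eq_abs]
    _ ≤ ‖a - b‖ / ‖a‖ + ‖a - b‖ / ‖a‖ := by
        apply add_le_add _ hdiff
        rw [inv_mul_eq_div]
    _ = 2 * ‖a - b‖ / ‖a‖ := by ring

/-- Success probability and fidelity of the probabilistic state-preparation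
algorithm with `t = 2n + ⌈log₂(π/ε)⌉` bits of phase estimation: if the
approximate angles satisfy `0 ≤ α̃_i ≤ α_i` and `α_i − α̃_i < π/2^{t+1}`, then
(i) the success probability `(1/2^n)Σ cos² α̃_i` is at least
`‖x‖²/(2^n·max_i x_i²)`, and (ii) `‖x_r − x̃_r‖ ≤ ε`. -/
theorem probabilistic_preparation (n : ℕ) (hn : 1 ≤ n)
    (x : Fin (2 ^ n) → ℝ) (hx0 : x ≠ 0) (hxnn : ∀ i, 0 ≤ x i)
    (α : Fin (2 ^ n) → ℝ)
    (hα : ∀ i, α i = Real.arccos (x i / maxEntry n x))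
    (ε : ℝ) (hε : 0 < ε) (t : ℤ)
    (ht : t = 2 * n + ⌈Real.logb 2 (Real.pi / ε)⌉)
    (αt : Fin (2 ^ n) → ℝ)
    (hαt : ∀ i, 0 ≤ αt i ∧ αt i ≤ α i ∧
      α i - αt i < Real.pi / (2 : ℝ) ^ (t + 1)) :
    (∑ i, x i ^ 2) / (2 ^ n * maxEntry n x ^ 2) ≤
      (1 / 2 ^ n) * ∑ i, Real.cos (αt i) ^ 2 ∧
    Real.sqrt (∑ i,
      (x i / Real.sqrt (∑ j, x j ^ 2) -
        Real.cos (αt i) / Real.sqrt (∑ j, Real.cos (αt j) ^ 2)) ^ 2) ≤ ε := by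
  set m := maxEntry n x with hm_def
  -- basic facts about m
  obtain ⟨i₁, hi₁⟩ : ∃ i, x i ≠ 0 := Function.ne_iff.mp hx0
  have hxle : ∀ i, x i ≤ m := fun i => Finset.le_sup' x (Finset.mem_univ i)
  have hm : 0 < m := lt_of_lt_of_le ((hxnn i₁).lt_of_ne (Ne.symm hi₁)) (hxle i₁)
  obtain ⟨i₀, -, hi₀⟩ := Finset.exists_mem_eq_sup' (α := ℝ)
    ⟨⟨0, Nat.two_pow_pos n⟩, Finset.mem_univ _⟩ x
  have hxi₀ : x i₀ = m := hi₀.symm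
  -- cos of the angles
  have hratio : ∀ i, 0 ≤ x i / m ∧ x i / m ≤ 1 := fun i =>
    ⟨div_nonneg (hxnn i) hm.le, (div_le_one hm).mpr (hxle i)⟩
  have hcosα : ∀ i, Real.cos (α i) = x i / m := fun i => by
    rw [hα]; exact Real.cos_arccos (le_trans (by norm_num) (hratio i).1) (hratio i).2
  have hαpi : ∀ i, α i ≤ Real.pi := fun i => by rw [hα]; exact Real.arccos_le_pi _
  have hαhalf : ∀ i, α i ≤ Real.pi / 2 := fun i => by
    rw [hα]; exact Real.arccos_le_pi_div_two.mpr (hratio i).1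
  have hc_nonneg : ∀ i, 0 ≤ Real.cos (αt i) := fun i =>
    Real.cos_nonneg_of_mem_Icc ⟨by linarith [Real.pi_pos, (hαt i).1],
      le_trans (hαt i).2.1 (hαhalf i)⟩
  have hc_ge : ∀ i, x i / m ≤ Real.cos (αt i) := fun i => by
    rw [← hcosα i]
    exact Real.cos_le_cos_of_nonneg_of_le_pi (hαt i).1 (hαpi i) (hαt i).2.1
  constructor
  · -- part (i)
    have h1 : (1 / (2:ℝ) ^ n) * ∑ i, (x i / m) ^ 2
        = (∑ i, x i ^ 2) / (2 ^ n * m ^ 2) := by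
      rw [Finset.sum_div, Finset.mul_sum]
      apply Finset.sum_congr rfl
      intro i _
      rw [div_pow]
      field_simp
    rw [← h1]
    have hterm : ∀ i, (x i / m) ^ 2 ≤ Real.cos (αt i) ^ 2 := fun i =>
      sq_le_sq' (by linarith [hc_nonneg i, (hratio i).1]) (hc_ge i)
    exact mul_le_mul_of_nonneg_left
      (Finset.sum_le_sum fun i _ => hterm i) (by positivity)
  · -- part (ii)
    set δ := Real.pi / (2 : ℝ) ^ (t + 1) with hδ_def
    have hδpos : 0 < δ := by positivity
    -- Euclidean space vectors
    set A : EuclideanSpace ℝ (Fin (2 ^ n)) := WithLp.toLp 2 (fun i => Real.cos (α i)) with hA_def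
    set B : EuclideanSpace ℝ (Fin (2 ^ n)) := WithLp.toLp 2 (fun i => Real.cos (αt i)) with hB_def
    have hnormA : ‖A‖ = Real.sqrt (∑ j, Real.cos (α j) ^ 2) := by
      rw [EuclideanSpace.norm_eq]
      congr 1
      exact Finset.sum_congr rfl fun j _ => by rw [Real.norm_eq_abs, sq_abs]
    have hnormB : ‖B‖ = Real.sqrt (∑ j, Real.cos (αt j) ^ 2) := by
      rw [EuclideanSpace.norm_eq]
      congr 1
      exact Finset.sum_congr rfl fun j _ => by rw [Real.norm_eq_abs, sq_abs]
    have hcos_i₀ : Real.cos (α i₀) = 1 := by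
      rw [hcosα i₀, hxi₀, div_self hm.ne']
    have hA1 : 1 ≤ ‖A‖ := by
      rw [hnormA]
      rw [show (1:ℝ) = Real.sqrt 1 by simp]
      apply Real.sqrt_le_sqrt
      calc (1:ℝ) = Real.cos (α i₀) ^ 2 := by rw [hcos_i₀]; norm_num
        _ ≤ ∑ j, Real.cos (α j) ^ 2 :=
            Finset.single_le_sum (f := fun j => Real.cos (α j) ^ 2)
              (fun j _ => sq_nonneg _) (Finset.mem_univ i₀)
    have hApos : (0:ℝ) < ‖A‖ := lt_of_lt_of_le one_pos hA1
    have hAne : A ≠ 0 := fun h => by rw [h, norm_zero] at hApos; exact lt_irrefl _ hApos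
    have hBne : B ≠ 0 := by
      intro h
      have h0 : Real.cos (αt i₀) = 0 := congrArg (fun v : EuclideanSpace ℝ (Fin (2^n)) => v i₀) h
      have h1 : (1:ℝ) ≤ Real.cos (αt i₀) := by
        calc (1:ℝ) = x i₀ / m := by rw [hxi₀, div_self hm.ne']
          _ ≤ Real.cos (αt i₀) := hc_ge i₀
      linarith
    -- rewrite the goal sum as a norm
    have hsum_x : ∑ j, x j ^ 2 = m ^ 2 * ∑ j, Real.cos (α j) ^ 2 := by
      rw [Finset.mul_sum]
      apply Finset.sum_congr rfl
      intro j _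
      rw [hcosα, div_pow]
      field_simp
    have hxr : ∀ i, x i / Real.sqrt (∑ j, x j ^ 2) = (‖A‖⁻¹ • A) i := by
      intro i
      have hs : Real.sqrt (∑ j, x j ^ 2) = m * ‖A‖ := by
        rw [hsum_x, hnormA, Real.sqrt_mul (by positivity), Real.sqrt_sq hm.le]
      rw [hs]
      have hAi : A i = x i / m := by rw [hA_def]; exact hcosα i
      simp only [PiLp.smul_apply, smul_eq_mul, hAi]
      rw [inv_mul_eq_div, div_div]
    have hxt : ∀ i, Real.cos (αt i) / Real.sqrt (∑ j, Real.cos (αt j) ^ 2)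
        = (‖B‖⁻¹ • B) i := by
      intro i
      rw [← hnormB]
      have hBi : B i = Real.cos (αt i) := rfl
      simp only [PiLp.smul_apply, smul_eq_mul, hBi]
      rw [inv_mul_eq_div]
    have hgoal_eq : Real.sqrt (∑ i,
        (x i / Real.sqrt (∑ j, x j ^ 2) -
          Real.cos (αt i) / Real.sqrt (∑ j, Real.cos (αt j) ^ 2)) ^ 2)
        = ‖‖A‖⁻¹ • A - ‖B‖⁻¹ • B‖ := by
      rw [EuclideanSpace.norm_eq]
      congr 1
      apply Finset.sum_congr rfl
      intro i _
      rw [Real.norm_eq_abs, sq_abs, PiLp.sub_apply, hxr i, hxt i]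
    rw [hgoal_eq]
    -- bound the distance between A and B
    have hAB : ‖A - B‖ ≤ Real.sqrt (2 ^ n) * δ := by
      have hstep : ‖A - B‖ ≤ Real.sqrt (∑ _i : Fin (2 ^ n), δ ^ 2) := by
        rw [EuclideanSpace.norm_eq]
        apply Real.sqrt_le_sqrt
        apply Finset.sum_le_sum
        intro i _
        rw [PiLp.sub_apply, Real.norm_eq_abs, sq_abs]
        have h1 : |Real.cos (α i) - Real.cos (αt i)| ≤ |α i - αt i| :=
          abs_cos_sub_cos_le _ _
        have h2 : |α i - αt i| ≤ δ := by
          rw [abs_of_nonneg (by linarith [(hαt i).2.1])]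
          exact le_of_lt (hαt i).2.2
        have h3 : |A i - B i| ≤ δ := le_trans h1 h2
        calc (A i - B i) ^ 2 = |A i - B i| ^ 2 := (sq_abs _).symm
          _ ≤ δ ^ 2 := by gcongr <;> exact abs_nonneg _
      calc ‖A - B‖ ≤ Real.sqrt (∑ _i : Fin (2 ^ n), δ ^ 2) := hstep
        _ = Real.sqrt (2 ^ n * δ ^ 2) := by
            rw [Finset.sum_const, Finset.card_univ, Fintype.card_fin]
            norm_num
        _ = Real.sqrt (2 ^ n) * δ := by
            rw [Real.sqrt_mul (by positivity), Real.sqrt_sq hδpos.le]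
    -- the key numeric inequality
    have hkey : 2 * (Real.sqrt (2 ^ n) * δ) ≤ ε := by
      have hπε : 0 < Real.pi / ε := div_pos Real.pi_pos hε
      have h2t : (2:ℝ) ^ (2 * n : ℕ) * (Real.pi / ε) ≤ (2:ℝ) ^ t := by
        have e1 : (2:ℝ) ^ t = (2:ℝ) ^ (t : ℝ) := by
          rw [← Real.rpow_intCast]
        have e2 : (2:ℝ) ^ ((2 * n : ℕ) : ℝ) * (Real.pi / ε)
            = (2:ℝ) ^ (((2 * n : ℕ) : ℝ) + Real.logb 2 (Real.pi / ε)) := by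
          rw [Real.rpow_add (by norm_num), Real.rpow_logb (by norm_num) (by norm_num) hπε]
        have e3 : ((2 * n : ℕ) : ℝ) + Real.logb 2 (Real.pi / ε) ≤ (t : ℝ) := by
          have := Int.le_ceil (Real.logb 2 (Real.pi / ε))
          rw [ht]
          push_cast
          linarith
        calc (2:ℝ) ^ (2 * n : ℕ) * (Real.pi / ε)
            = (2:ℝ) ^ ((2 * n : ℕ) : ℝ) * (Real.pi / ε) := by
              rw [Real.rpow_natCast]
          _ = (2:ℝ) ^ (((2 * n : ℕ) : ℝ) + Real.logb 2 (Real.pi / ε)) := e2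
          _ ≤ (2:ℝ) ^ ((t : ℤ) : ℝ) := by
              apply Real.rpow_le_rpow_of_exponent_le (by norm_num) e3
          _ = (2:ℝ) ^ t := e1.symm
      have h2t' : Real.pi * (2:ℝ) ^ (2 * n : ℕ) ≤ ε * (2:ℝ) ^ t := by
        have hh := mul_le_mul_of_nonneg_left h2t hε.le
        calc Real.pi * (2:ℝ) ^ (2 * n : ℕ)
            = ε * ((2:ℝ) ^ (2 * n : ℕ) * (Real.pi / ε)) := by field_simp
          _ ≤ ε * (2:ℝ) ^ t := hh
      have hsqrtN : Real.sqrt ((2:ℝ) ^ n) ≤ (2:ℝ) ^ n := by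
        have h1 : (1:ℝ) ≤ (2:ℝ) ^ n := one_le_pow₀ (by norm_num)
        have h2 := Real.sqrt_le_sqrt (show (2:ℝ) ^ n ≤ ((2:ℝ) ^ n) ^ 2 by nlinarith)
        rwa [Real.sqrt_sq (by positivity)] at h2
      have h2pow : (2:ℝ) ^ (t + 1) = 2 * (2:ℝ) ^ t := by
        rw [zpow_add_one₀ (by norm_num)]; ring
      have hzt : (0:ℝ) < (2:ℝ) ^ t := by positivity
      have step : Real.sqrt ((2:ℝ) ^ n) * Real.pi ≤ ε * (2:ℝ) ^ t := by
        have s2 : ((2:ℝ) ^ n) ≤ (2:ℝ) ^ (2 * n : ℕ) :=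
          pow_le_pow_right₀ (by norm_num) (by omega)
        nlinarith [hsqrtN, Real.sqrt_nonneg ((2:ℝ) ^ n), h2t', Real.pi_pos]
      rw [hδ_def, h2pow]
      calc 2 * (Real.sqrt ((2:ℝ) ^ n) * (Real.pi / (2 * (2:ℝ) ^ t)))
          = Real.sqrt ((2:ℝ) ^ n) * Real.pi / (2:ℝ) ^ t := by
            field_simp
        _ ≤ ε := by
            rw [div_le_iff₀ hzt]
            exact step
    calc ‖‖A‖⁻¹ • A - ‖B‖⁻¹ • B‖ ≤ 2 * ‖A - B‖ / ‖A‖ :=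
          normalize_sub_le A B hAne hBne
      _ ≤ 2 * ‖A - B‖ / 1 := by gcongr
      _ = 2 * ‖A - B‖ := by ring
      _ ≤ 2 * (Real.sqrt (2 ^ n) * δ) := by gcongr
      _ ≤ ε := hkey
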